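/- Let r, k, n be positive integers. The number of (r,k)-parking functions of length n equals k(rn+k)^(n-1). -/

import Mathlib

open Finset


/-- `a` is an `(r,k)`-parking function of length `n`: its weakly increasing rearrangement
`b i = a (σ i)` satisfies `b i ≤ k + (i-1)r` (here `i` is `0`-indexed, so `b i ≤ k + i·r`). -/
def IsRKParkingFunction (r k n : ℕ) (a : Fin n → ℕ) : Prop :=
  ∃ σ : Equiv.Perm (Fin n), Monotone (a ∘ σ) ∧ ∀ i : Fin n, a (σ i) ≤ k + i.val * r


def ParkCount (r k n : ℕ) (a : Fin n → ℕ) : Prop :=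
  ∀ j < n, j + 1 ≤ (univ.filter fun i : Fin n => a i ≤ k + j * r).card

lemma card_val_lt (n j : ℕ) (hj : j ≤ n) :
    (univ.filter fun i : Fin n => i.val < j).card = j := by
  rw [Finset.card_eq_of_bijective (f := fun v (hv : v < j) => ⟨v, by omega⟩)]
  · intro i hi
    simp only [mem_filter, mem_univ, true_and] at hi
    exact ⟨i.val, hi, rfl⟩
  · intro v hv
    simp only [mem_filter, mem_univ, true_and]
    exact hv
  · intro v₁ v₂ h₁ h₂ h
    simpa [Fin.ext_iff] using h

lemma isRK_iff_parkCount (r k n : ℕ) (a : Fin n → ℕ) :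
    IsRKParkingFunction r k n a ↔ ParkCount r k n a := by
  constructor
  · rintro ⟨σ, hmono, hbound⟩ j hj
    rw [← card_val_lt n (j + 1) hj]
    apply Finset.card_le_card_of_injOn σ
    · intro i hi
      simp only [Finset.mem_coe, mem_filter, mem_univ, true_and] at hi ⊢
      calc a (σ i) ≤ k + i.val * r := hbound i
        _ ≤ k + j * r := by
            have hij : i.val ≤ j := by omega
            have := Nat.mul_le_mul_right r hij; omega
    · exact fun x _ y _ h => σ.injective h
  · intro h
    refine ⟨Tuple.sort a, Tuple.monotone_sort a, fun i => ?_⟩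
    have hcard := h i.val i.isLt
    by_contra hcon
    push_neg at hcon
    have hsub : (univ.filter fun l : Fin n => a l ≤ k + i.val * r).image (Tuple.sort a).symm
        ⊆ univ.filter fun l : Fin n => l.val < i.val := by
      intro l hl
      simp only [mem_image, mem_filter, mem_univ, true_and] at hl ⊢
      obtain ⟨f, hf, rfl⟩ := hl
      by_contra hli
      push_neg at hli
      have hil : i ≤ (Tuple.sort a).symm f := Fin.le_def.mpr hli
      have hm := Tuple.monotone_sort a hil
      simp only [Function.comp_apply, Equiv.apply_symm_apply] at hm
      omega
    have hle := Finset.card_le_card hsub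
    rw [Finset.card_image_of_injective _ (Tuple.sort a).symm.injective,
      card_val_lt n i.val (le_of_lt i.isLt)] at hle
    omega

lemma parkCount_iff_thresh (r k n : ℕ) (hr : 0 < r) (hk : 0 < k) (hn : 0 < n)
    (a : Fin n → ℕ) :
    ParkCount r k n a ↔
      ∀ p < r * n + k - 1,
        p + 2 ≤ r * (univ.filter fun i : Fin n => a i ≤ p + 1).card + k := by
  constructor
  · intro h p hp
    by_cases hpk : p + 2 ≤ k
    · omega
    · have hkp : k ≤ p + 1 := by omega
      set j := (p + 1 - k) / r with hj
      have hdm := Nat.div_add_mod (p + 1 - k) r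
      rw [← hj] at hdm
      have hmod := Nat.mod_lt (p + 1 - k) hr
      have hcm : r * j = j * r := Nat.mul_comm r j
      have hjn : j < n := by
        rw [hj, Nat.div_lt_iff_lt_mul hr]
        have : r * n = n * r := Nat.mul_comm r n
        omega
      have hjb : k + j * r ≤ p + 1 := by omega
      have hc := h j hjn
      have hmono : (univ.filter fun i : Fin n => a i ≤ k + j * r).card
          ≤ (univ.filter fun i : Fin n => a i ≤ p + 1).card :=
        Finset.card_le_card (Finset.monotone_filter_right univ (fun i hi => by omega))
      have hmul : r * (j + 1) ≤ r * (univ.filter fun i : Fin n => a i ≤ p + 1).card :=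
        Nat.mul_le_mul_left r (by omega)
      have : r * (j + 1) = j * r + r := by ring
      omega
  · intro h j hj
    have hjr : j * r + r ≤ n * r := by
      have : j + 1 ≤ n := hj
      calc j * r + r = (j + 1) * r := by ring
        _ ≤ n * r := Nat.mul_le_mul_right r this
    have hp : k + j * r - 1 < r * n + k - 1 := by
      have : r * n = n * r := Nat.mul_comm r n
      omega
    have hc := h (k + j * r - 1) hp
    have hpe : k + j * r - 1 + 1 = k + j * r := by omega
    rw [hpe] at hc
    by_contra hcon
    push_neg at hcon
    have hle : (univ.filter fun i : Fin n => a i ≤ k + j * r).card ≤ j := by omega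
    have := Nat.mul_le_mul_left r hle
    have hrj : r * j = j * r := Nat.mul_comm r j
    omega

private def Mfun (G : ℕ → ℤ) : ℕ → ℤ
  | 0 => G 0
  | q + 1 => min (Mfun G q) (G (q + 1))

private lemma Mfun_le (G : ℕ → ℤ) : ∀ q j, j ≤ q → Mfun G q ≤ G j := by
  intro q
  induction q with
  | zero => intro j hj; interval_cases j; exact le_refl _
  | succ q ih =>
    intro j hj
    rcases Nat.lt_or_ge j (q + 1) with h | h
    · exact le_trans (min_le_left _ _) (ih j (by omega))
    · have : j = q + 1 := by omega
      subst this; exact min_le_right _ _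

private lemma Mfun_mem (G : ℕ → ℤ) : ∀ q, ∃ j ≤ q, Mfun G q = G j := by
  intro q
  induction q with
  | zero => exact ⟨0, le_refl _, rfl⟩
  | succ q ih =>
    obtain ⟨j, hj, hM⟩ := ih
    rcases le_or_gt (Mfun G q) (G (q + 1)) with h | h
    · refine ⟨j, by omega, ?_⟩
      show min (Mfun G q) (G (q + 1)) = G j
      rw [min_eq_left h, hM]
    · refine ⟨q + 1, le_refl _, ?_⟩
      show min (Mfun G q) (G (q + 1)) = G (q + 1)
      rw [min_eq_right (le_of_lt h)]

private lemma Mfun_anti (G : ℕ → ℤ) (a b : ℕ) (h : a ≤ b) : Mfun G b ≤ Mfun G a := by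
  induction b with
  | zero =>
    have ha : a = 0 := by omega
    rw [ha]
  | succ b ih =>
    rcases Nat.lt_or_ge a (b + 1) with h' | h'
    · exact le_trans (min_le_left _ _) (ih (by omega))
    · have : a = b + 1 := by omega
      subst this; exact le_refl _

private lemma sMin_iff (G : ℕ → ℤ) (q : ℕ) :
    (∀ q' < q + 1, G (q + 1) < G q') ↔ G (q + 1) < Mfun G q := by
  constructor
  · intro h
    obtain ⟨j, hj, hM⟩ := Mfun_mem G q
    rw [hM]; exact h j (by omega)
  · intro h q' hq'
    exact lt_of_lt_of_le h (Mfun_le G q q' (by omega))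

private lemma count_sMin (G : ℕ → ℤ) (hstep : ∀ q, G q - 1 ≤ G (q + 1)) (q0 : ℕ) :
    ∀ b, ((Ioc q0 (q0 + b)).filter fun q => ∀ q' < q, G q < G q').card
      = (Mfun G q0 - Mfun G (q0 + b)).toNat := by
  intro b
  induction b with
  | zero => simp
  | succ b ih =>
    have hnotmem : q0 + b + 1 ∉ Ioc q0 (q0 + b) := by simp
    have hIoc : Ioc q0 (q0 + (b + 1)) = insert (q0 + b + 1) (Ioc q0 (q0 + b)) := by
      rw [show q0 + (b + 1) = (q0 + b) + 1 by omega]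
      ext x; simp [Finset.mem_Ioc]; omega
    rw [hIoc, Finset.filter_insert]
    have hanti := Mfun_anti G q0 (q0 + b) (by omega)
    have hMsucc : Mfun G (q0 + (b + 1)) = min (Mfun G (q0 + b)) (G (q0 + b + 1)) := by
      rw [show q0 + (b + 1) = (q0 + b) + 1 by omega]; rfl
    by_cases hs : ∀ q' < q0 + b + 1, G (q0 + b + 1) < G q'
    · rw [if_pos hs, Finset.card_insert_of_notMem (fun hmem => hnotmem (Finset.mem_of_mem_filter _ hmem)), ih]
      have hlt : G (q0 + b + 1) < Mfun G (q0 + b) := (sMin_iff G (q0 + b)).mp hs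
      have hge : Mfun G (q0 + b) - 1 ≤ G (q0 + b + 1) :=
        le_trans (by have := Mfun_le G (q0 + b) (q0 + b) (le_refl _); omega) (hstep (q0 + b))
      have : Mfun G (q0 + (b + 1)) = Mfun G (q0 + b) - 1 := by
        rw [hMsucc]; omega
      omega
    · rw [if_neg hs, ih]
      have hge : Mfun G (q0 + b) ≤ G (q0 + b + 1) := by
        by_contra hlt
        exact hs ((sMin_iff G (q0 + b)).mpr (by omega))
      have : Mfun G (q0 + (b + 1)) = Mfun G (q0 + b) := by
        rw [hMsucc]; omega
      omega

private lemma Mfun_per (G : ℕ → ℤ) (m k : ℕ) (hper : ∀ q, G (q + m) = G q - k)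
    (q : ℕ) (hq : m - 1 ≤ q) : Mfun G (q + m) = Mfun G q - k := by
  have h1 : Mfun G (q + m) ≤ Mfun G q - k := by
    obtain ⟨j, hj, hM⟩ := Mfun_mem G q
    calc Mfun G (q + m) ≤ G (j + m) := Mfun_le G (q + m) (j + m) (by omega)
      _ = G j - k := hper j
      _ = Mfun G q - k := by rw [hM]
  have h2 : Mfun G q - k ≤ Mfun G (q + m) := by
    obtain ⟨j, hj, hM⟩ := Mfun_mem G (q + m)
    rcases Nat.lt_or_ge q j with h | h
    · have hjm : m ≤ j := by omega
      have : G j = G (j - m) - k := by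
        have := hper (j - m)
        rw [show j - m + m = j by omega] at this
        omega
      have := Mfun_le G q (j - m) (by omega)
      omega
    · have := Mfun_le G q j h
      have hk0 : (0 : ℤ) ≤ k := Int.natCast_nonneg k
      omega
  omega

lemma cycle_count (G : ℕ → ℤ) (m k : ℕ) (hm : 0 < m)
    (hstep : ∀ q, G q - 1 ≤ G (q + 1)) (hper : ∀ q, G (q + m) = G q - k) :
    ((Ioc (m - 1) (2 * m - 1)).filter fun q => ∀ q' < q, G q < G q').card = k := by
  have h2m : 2 * m - 1 = (m - 1) + m := by omega
  rw [h2m, count_sMin G hstep, Mfun_per G m k hper (m - 1) (le_refl _)]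
  omega

lemma good_iff_sMin (G : ℕ → ℤ) (m k : ℕ) (hm : 0 < m) (hk : 0 < k)
    (hper : ∀ q, G (q + m) = G q - k) (j₀ : ℕ) :
    (∀ q, j₀ < q → q < j₀ + m → G (j₀ + m) < G q) ↔
      (∀ q' < j₀ + m, G (j₀ + m) < G q') := by
  have hper_s : ∀ s q, G (q + s * m) = G q - s * k := by
    intro s
    induction s with
    | zero => simp
    | succ s ih =>
      intro q
      have : q + (s + 1) * m = (q + s * m) + m := by ring
      rw [this, hper, ih q]
      push_cast; ring
  constructor
  · intro h q' hq'
    rcases Nat.lt_or_ge j₀ q' with hlt | hle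
    · exact h q' hlt hq'
    · set d := j₀ - q' with hd
      set s := d / m + 1 with hs
      have hdm := Nat.div_add_mod d m
      have hmod := Nat.mod_lt d hm
      have hsm : s * m = d / m * m + m := by rw [hs]; ring
      have hcm : m * (d / m) = d / m * m := Nat.mul_comm _ _
      have h1 : j₀ < q' + s * m := by omega
      have h2 : q' + s * m ≤ j₀ + m := by omega
      have hG : G (q' + s * m) = G q' - s * k := hper_s s q'
      have hsk : (1 : ℤ) ≤ (s : ℤ) * k := by
        have : 1 ≤ s * k := Nat.one_le_iff_ne_zero.mpr (by positivity)
        exact_mod_cast this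
      rcases Nat.eq_or_lt_of_le h2 with he | hlt2
      · rw [← he, hG]; omega
      · have := h (q' + s * m) h1 hlt2
        omega
  · intro h q hq1 hq2
    exact h q hq2

def Park0 (r k m : ℕ) {n : ℕ} (c : Fin n → ZMod m) : Prop :=
  ∀ p < m - 1, p + 2 ≤ r * (univ.filter fun i : Fin n => (c i).val ≤ p).card + k

open scoped Classical in
lemma good_count (r k n m : ℕ) [NeZero m] (hr : 0 < r) (hk : 0 < k) (hn : 0 < n)
    (hm : m = r * n + k) (c : Fin n → ZMod m) :
    (univ.filter fun t : ZMod m => Park0 r k m (fun i => c i + t)).card = k := by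
  have hm0 : 0 < m := by omega
  set g : ℕ → ℕ := fun j => (univ.filter fun i : Fin n => c i = (j : ZMod m)).card with hg
  set G : ℕ → ℤ := fun q => (r : ℤ) * (∑ j ∈ range q, (g j : ℤ)) - q with hG
  -- (d1) shifted window sums
  have hwin : ∀ q : ℕ, ∑ j ∈ range m, g (q + j) = n := by
    intro q
    have hfib := Finset.card_eq_sum_card_fiberwise
      (f := fun i : Fin n => (c i - (q : ZMod m)).val) (s := univ) (t := range m)
      (fun i _ => by simp [ZMod.val_lt])
    rw [Finset.card_univ, Fintype.card_fin] at hfib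
    rw [hfib]
    apply Finset.sum_congr rfl
    intro v hv
    simp only [mem_range] at hv
    simp only [hg]
    congr 1
    apply Finset.filter_congr
    intro i _
    constructor
    · intro hci
      have hx : c i - (q : ZMod m) = (v : ZMod m) := by
        rw [hci]
        push_cast
        ring
      rw [hx, ZMod.val_cast_of_lt hv]
    · intro hval
      have hx : c i - (q : ZMod m) = (v : ZMod m) := by
        rw [← hval]
        exact (ZMod.natCast_rightInverse _).symm
      rw [sub_eq_iff_eq_add] at hx
      rw [hx]
      push_cast
      ring
  -- steps
  have hstep : ∀ q, G q - 1 ≤ G (q + 1) := by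
    intro q
    simp only [hG, Finset.sum_range_succ]
    have h0 : (0 : ℤ) ≤ (r : ℤ) * (g q : ℤ) := by positivity
    push_cast
    nlinarith [h0]
  -- periodicity
  have hper : ∀ q, G (q + m) = G q - k := by
    intro q
    simp only [hG]
    rw [Finset.sum_range_add]
    have hw : (∑ j ∈ range m, (g (q + j) : ℤ)) = (n : ℤ) := by exact_mod_cast hwin q
    rw [hw]
    have hmz : (m : ℤ) = r * n + k := by exact_mod_cast hm
    push_cast
    rw [hmz]; ring
  -- count formula for shifted functions
  have hC : ∀ (t : ZMod m) (p : ℕ), p < m →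
      (univ.filter fun i : Fin n => (c i + t).val ≤ p).card
        = ∑ v ∈ range (p + 1), g ((-t).val + v) := by
    intro t p hp
    have hjt : (((-t).val : ℕ) : ZMod m) = -t := ZMod.natCast_rightInverse _
    have hfib := Finset.card_eq_sum_card_fiberwise
      (f := fun i : Fin n => (c i + t).val)
      (s := univ.filter fun i : Fin n => (c i + t).val ≤ p) (t := range (p + 1))
      (fun i hi => by simp only [Finset.mem_coe, mem_filter] at hi; simp [Nat.lt_succ_of_le hi.2])
    rw [hfib]
    apply Finset.sum_congr rfl
    intro v hv
    simp only [mem_range] at hv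
    have hvm : v < m := by omega
    simp only [hg]
    congr 1
    rw [Finset.filter_filter]
    apply Finset.filter_congr
    intro i _
    constructor
    · rintro ⟨_, hxv⟩
      have hx : c i + t = (v : ZMod m) := by
        rw [← hxv]
        exact (ZMod.natCast_rightInverse _).symm
      push_cast
      rw [hjt, ← hx]
      ring
    · intro hci
      have hx : c i + t = (v : ZMod m) := by
        push_cast at hci
        rw [hjt] at hci
        rw [hci]; ring
      rw [hx, ZMod.val_cast_of_lt hvm]
      exact ⟨by omega, rfl⟩
  -- key equivalence : Park0 of the shift ↔ strict-left-min at j₀ + m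
  have hkey : ∀ t : ZMod m,
      Park0 r k m (fun i => c i + t) ↔
        (∀ q' < (-t).val + m, G ((-t).val + m) < G q') := by
    intro t
    set j₀ := (-t).val with hj₀
    have harith : ∀ p, p < m - 1 →
        ((p + 2 ≤ r * (univ.filter fun i : Fin n => (c i + t).val ≤ p).card + k) ↔
          G (j₀ + m) < G (j₀ + p + 1)) := by
      intro p hp
      rw [hC t p (by omega)]
      have hGm : G (j₀ + m) = G j₀ - k := hper j₀
      have hGp : G (j₀ + p + 1)
          = G j₀ + (r : ℤ) * (∑ v ∈ range (p + 1), (g (j₀ + v) : ℤ)) - (p + 1) := by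
        simp only [hG]
        rw [show j₀ + p + 1 = j₀ + (p + 1) by omega, Finset.sum_range_add]
        push_cast
        ring
      rw [hGm, hGp]
      have hcast : ((∑ v ∈ range (p + 1), g (j₀ + v) : ℕ) : ℤ)
          = ∑ v ∈ range (p + 1), (g (j₀ + v) : ℤ) := by push_cast; ring
      constructor
      · intro h
        have h' : ((p : ℤ) + 2) ≤ (r : ℤ) * ((∑ v ∈ range (p + 1), g (j₀ + v) : ℕ) : ℤ) + k := by
          exact_mod_cast h
        rw [hcast] at h'
        linarith
      · intro h
        have h' : ((p : ℤ) + 2) ≤ (r : ℤ) * ((∑ v ∈ range (p + 1), g (j₀ + v) : ℕ) : ℤ) + k := by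
          rw [hcast]
          linarith
        exact_mod_cast h'
    rw [← good_iff_sMin G m k hm0 hk hper j₀]
    constructor
    · intro hpark q hq1 hq2
      have hp : q - j₀ - 1 < m - 1 := by omega
      have := (harith (q - j₀ - 1) hp).mp (hpark (q - j₀ - 1) hp)
      rwa [show j₀ + (q - j₀ - 1) + 1 = q by omega] at this
    · intro hsmin p hp
      exact (harith p hp).mpr (hsmin (j₀ + p + 1) (by omega) (by omega))
  -- bijection with strict-left-min positions and conclude
  have hbij : (univ.filter fun t : ZMod m => Park0 r k m (fun i => c i + t)).card
      = ((Ioc (m - 1) (2 * m - 1)).filter fun q => ∀ q' < q, G q < G q').card := by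
    apply Finset.card_bij' (i := fun t _ => (-t).val + m)
      (j := fun q _ => -(((q - m : ℕ) : ZMod m)))
    · intro t ht
      simp only [mem_filter, mem_univ, true_and] at ht ⊢
      refine ⟨?_, (hkey t).mp ht⟩
      have := ZMod.val_lt (-t)
      simp only [mem_Ioc]
      omega
    · intro q hq
      simp only [mem_filter, mem_Ioc, mem_univ, true_and] at hq ⊢
      obtain ⟨⟨hq1, hq2⟩, hsmin⟩ := hq
      apply (hkey _).mpr
      have hv : (-(-((q - m : ℕ) : ZMod m))).val = q - m := by
        rw [neg_neg, ZMod.val_cast_of_lt (by omega)]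
      rw [hv, show q - m + m = q by omega]
      exact hsmin
    · intro t ht
      simp only [Nat.add_sub_cancel]
      rw [ZMod.natCast_rightInverse _, neg_neg]
    · intro q hq
      simp only [mem_filter, mem_Ioc] at hq
      rw [neg_neg, ZMod.val_cast_of_lt (by omega)]
      omega

  rw [hbij]
  exact cycle_count G m k hm0 hstep hper

open scoped Classical in
lemma park0_card (r k n m : ℕ) [NeZero m] (hr : 0 < r) (hk : 0 < k) (hn : 0 < n)
    (hm : m = r * n + k) :
    (univ.filter fun c : Fin n → ZMod m => Park0 r k m c).card = k * m ^ (n - 1) := by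
  have hmcard : Fintype.card (ZMod m) = m := ZMod.card m
  have hdouble :
      ∑ c : Fin n → ZMod m, ∑ t : ZMod m,
          (if Park0 r k m (fun i => c i + t) then 1 else 0)
        = ∑ t : ZMod m, ∑ c : Fin n → ZMod m,
          (if Park0 r k m (fun i => c i + t) then 1 else 0) := Finset.sum_comm
  have hleft : ∑ c : Fin n → ZMod m, ∑ t : ZMod m,
      (if Park0 r k m (fun i => c i + t) then 1 else 0) = m ^ n * k := by
    have : ∀ c : Fin n → ZMod m,
        ∑ t : ZMod m, (if Park0 r k m (fun i => c i + t) then 1 else 0) = k := by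
      intro c
      rw [← Finset.card_filter]
      exact good_count r k n m hr hk hn hm c
    rw [Finset.sum_congr rfl (fun c _ => this c), Finset.sum_const, Finset.card_univ,
      Fintype.card_fun, hmcard, Fintype.card_fin, smul_eq_mul]
  have hright : ∑ t : ZMod m, ∑ c : Fin n → ZMod m,
      (if Park0 r k m (fun i => c i + t) then 1 else 0)
        = m * (univ.filter fun c : Fin n → ZMod m => Park0 r k m c).card := by
    have : ∀ t : ZMod m,
        ∑ c : Fin n → ZMod m, (if Park0 r k m (fun i => c i + t) then 1 else 0)
          = (univ.filter fun c : Fin n → ZMod m => Park0 r k m c).card := by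
      intro t
      rw [← Finset.card_filter]
      apply Finset.card_bij' (i := fun c _ => fun i => c i + t)
        (j := fun d _ => fun i => d i - t)
      · intro c hc
        simp only [mem_filter, mem_univ, true_and] at hc ⊢
        exact hc
      · intro d hd
        simp only [mem_filter, mem_univ, true_and] at hd ⊢
        have : (fun i => d i - t + t) = d := by funext i; ring
        rw [this]
        exact hd
      · intro c _; funext i; ring
      · intro d _; funext i; ring
    rw [Finset.sum_congr rfl (fun t _ => this t), Finset.sum_const, Finset.card_univ,
      hmcard, smul_eq_mul]
  have hmain : m * (univ.filter fun c : Fin n → ZMod m => Park0 r k m c).card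
      = m * (k * m ^ (n - 1)) := by
    rw [← hright, ← hdouble, hleft]
    have hpow : m ^ n = m * m ^ (n - 1) := by
      conv_lhs => rw [← Nat.succ_pred_eq_of_pos hn]
      rw [pow_succ, Nat.pred_eq_sub_one, mul_comm]
    rw [hpow]
    ring
  have hm0 : 0 < m := hm ▸ Nat.lt_of_lt_of_le hk (Nat.le_add_left k (r * n))
  exact Nat.eq_of_mul_eq_mul_left hm0 hmain

open scoped Classical in
/-- The number of `(r,k)`-parking functions of length `n` is `k(rn+k)^(n-1)`. -/
theorem stmt3 (r k n : ℕ) (hr : 0 < r) (hk : 0 < k) (hn : 0 < n) :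
    {a : Fin n → ℕ | (∀ i, 1 ≤ a i) ∧ IsRKParkingFunction r k n a}.ncard
      = k * (r * n + k) ^ (n - 1) := by
  set m := r * n + k with hm
  haveI : NeZero m := ⟨by omega⟩
  set P := (univ.filter fun c : Fin n → ZMod m => Park0 r k m c) with hP
  set Φ : (Fin n → ZMod m) → (Fin n → ℕ) := fun c i => (c i).val + 1 with hPhi
  have hinj : Function.Injective Φ := by
    intro c₁ c₂ h
    funext i
    have hfi := congrFun h i
    simp only [hPhi] at hfi
    exact ZMod.val_injective m (by omega)
  have hmul1 : (n - 1) * r + r = n * r := by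
    cases n with
    | zero => omega
    | succ n' => simp [Nat.succ_sub_one, Nat.succ_mul]
  have hmul2 : r * n = n * r := Nat.mul_comm r n
  have hset : {a : Fin n → ℕ | (∀ i, 1 ≤ a i) ∧ IsRKParkingFunction r k n a} = Φ '' ↑P := by
    ext a
    simp only [Set.mem_setOf_eq, Set.mem_image, Finset.mem_coe, hP, Finset.mem_filter,
      Finset.mem_univ, true_and]
    constructor
    · rintro ⟨hpos, hrk⟩
      have hpc := (isRK_iff_parkCount r k n a).mp hrk
      have hth := (parkCount_iff_thresh r k n hr hk hn a).mp hpc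
      have hbound : ∀ i, a i ≤ k + (n - 1) * r := by
        have hge := hpc (n - 1) (by omega)
        have hle := Finset.card_le_univ (univ.filter fun i : Fin n => a i ≤ k + (n - 1) * r)
        rw [Fintype.card_fin] at hle
        have huniv := Finset.eq_univ_of_card
          (univ.filter fun i : Fin n => a i ≤ k + (n - 1) * r)
          (by rw [Fintype.card_fin]; omega)
        intro i
        have hi : i ∈ univ.filter fun i : Fin n => a i ≤ k + (n - 1) * r := by
          rw [huniv]; exact mem_univ i
        simpa using hi
      have hmr : k + (n - 1) * r < m := by omega
      have hval : ∀ i, (((a i - 1 : ℕ) : ZMod m)).val = a i - 1 := fun i =>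
        ZMod.val_cast_of_lt (by have := hbound i; have := hpos i; omega)
      refine ⟨fun i => ((a i - 1 : ℕ) : ZMod m), ?_, ?_⟩
      · intro p hp
        have hfilter : (univ.filter fun i : Fin n => (((a i - 1 : ℕ) : ZMod m)).val ≤ p)
            = univ.filter fun i : Fin n => a i ≤ p + 1 := by
          apply Finset.filter_congr
          intro i _
          rw [hval i]
          have := hpos i
          constructor <;> intro <;> omega
        rw [hfilter]
        exact hth p hp
      · funext i
        simp only [hPhi]
        rw [hval i]
        have := hpos i
        omega
    · rintro ⟨c, hc, rfl⟩
      have hpos : ∀ i, 1 ≤ Φ c i := by intro i; simp [hPhi]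
      refine ⟨hpos, ?_⟩
      apply (isRK_iff_parkCount r k n (Φ c)).mpr
      apply (parkCount_iff_thresh r k n hr hk hn (Φ c)).mpr
      intro p hp
      have hfilter : (univ.filter fun i : Fin n => Φ c i ≤ p + 1)
          = univ.filter fun i : Fin n => (c i).val ≤ p := by
        apply Finset.filter_congr
        intro i _
        simp only [hPhi]
        omega
      rw [hfilter]
      exact hc p hp
  rw [hset, Set.ncard_image_of_injective _ hinj, Set.ncard_coe_finset]
  exact park0_card r k n m hr hk hn hm
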